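/- Let f be a homeomorphism of a compact metric space, let x be a non-periodic point, and suppose there exist ε > 0 and N ≥ 1 such that f^{kN}(f^l(x)) ∈ Γ_ε(f^l(x)) for all k ∈ ℤ and 0 ≤ l < N. Then any weak-* accumulation point μ of the uniform distributions on {x, f(x), ..., f^{n-1}(x)} (n → ∞) is an invariant measure satisfying μ(⋃_{l=0}^{N-1} Γ_ε(f^l(x))) = 1. -/

import Mathlib

open MeasureTheory Filter Metric Topology

variable {X : Type*}

/-- Iterate of a homeomorphism by an integer. -/
noncomputable def zit [TopologicalSpace X] (f : X ≃ₜ X) (i : ℤ) (x : X) : X :=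
  (f.toEquiv ^ i) x

/-- The dynamical ball `Γ_δ(x)` of a homeomorphism. -/
def Gamma [MetricSpace X] (f : X ≃ₜ X) (δ : ℝ) (x : X) : Set X :=
  {y | ∀ i : ℤ, dist (zit f i x) (zit f i y) ≤ δ}

/-- Shadowing property for one-sided (ℕ-indexed) pseudo-orbits. -/
def ShadowingN [MetricSpace X] (f : X → X) : Prop :=
  ∀ ε > (0 : ℝ), ∃ δ > (0 : ℝ), ∀ x : ℕ → X,
    (∀ i, dist (f (x i)) (x (i + 1)) < δ) →
    ∃ y, ∀ i, dist (f^[i] y) (x i) < ε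

/-- Shadowing property for two-sided (ℤ-indexed) pseudo-orbits of a homeomorphism. -/
def ShadowingZ [MetricSpace X] (f : X ≃ₜ X) : Prop :=
  ∀ ε > (0 : ℝ), ∃ δ > (0 : ℝ), ∀ x : ℤ → X,
    (∀ i, dist (f (x i)) (x (i + 1)) < δ) →
    ∃ y, ∀ i, dist (zit f i y) (x i) < ε

/-- Local weak specification property. -/
def LocalWeakSpec [MetricSpace X] (f : X → X) : Prop :=
  ∀ ε > (0 : ℝ), ∃ N : ℕ, ∃ δ > (0 : ℝ), ∀ n, N ≤ n → ∀ (k : ℕ) (x : ℕ → X),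
    (∀ i, i + 1 < k → dist (f^[n] (x i)) (x (i + 1)) < δ) →
    ∃ y, ∀ i < k, ∀ j, i * n ≤ j → j < (i + 1) * n →
      dist (f^[j] y) (f^[j - i * n] (x i)) < ε

/-- Local specification property (tracing point is periodic when the chain closes up). -/
def LocalSpec [MetricSpace X] (f : X → X) : Prop :=
  ∀ ε > (0 : ℝ), ∃ N : ℕ, ∃ δ > (0 : ℝ), ∀ n, N ≤ n → ∀ k, 1 ≤ k → ∀ x : ℕ → X,
    (∀ i < k, dist (f^[n] (x i)) (x ((i + 1) % k)) < δ) →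
    ∃ y, f^[k * n] y = y ∧ ∀ i < k, ∀ j, i * n ≤ j → j < (i + 1) * n →
      dist (f^[j] y) (f^[j - i * n] (x i)) < ε

/-- A point is periodic for `f`. -/
def IsPeriodicPt' (f : X → X) (y : X) : Prop := ∃ m, 1 ≤ m ∧ f^[m] y = y

/-- Periodic shadowing property for one-sided pseudo-orbits. -/
def PeriodicShadowingN [MetricSpace X] (f : X → X) : Prop :=
  ∀ ε > (0 : ℝ), ∃ δ > (0 : ℝ), ∀ x : ℕ → X,
    (∀ i, dist (f (x i)) (x (i + 1)) < δ) →
    (∃ M, 1 ≤ M ∧ ∀ i, x (i + M) = x i) →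
    ∃ y, IsPeriodicPt' f y ∧ ∀ i, dist (f^[i] y) (x i) < ε

/-- Periodic shadowing property for two-sided pseudo-orbits of a homeomorphism. -/
def PeriodicShadowingZ [MetricSpace X] (f : X ≃ₜ X) : Prop :=
  ∀ ε > (0 : ℝ), ∃ δ > (0 : ℝ), ∀ x : ℤ → X,
    (∀ i, dist (f (x i)) (x (i + 1)) < δ) →
    (∃ M : ℕ, 1 ≤ M ∧ ∀ i, x (i + M) = x i) →
    ∃ y, IsPeriodicPt' f y ∧ ∀ i, dist (zit f i y) (x i) < ε

/-- Strong periodic shadowing: the shadowing point has the same period as the pseudo-orbit. -/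
def StrongPeriodicShadowingZ [MetricSpace X] (f : X ≃ₜ X) : Prop :=
  ∀ ε > (0 : ℝ), ∃ δ > (0 : ℝ), ∀ (N : ℕ), 1 ≤ N → ∀ x : ℤ → X,
    (∀ i, dist (f (x i)) (x (i + 1)) < δ) →
    (∀ i, x (i + N) = x i) →
    ∃ y, f^[N] y = y ∧ ∀ i, dist (zit f i y) (x i) < ε

/-- Topological transitivity of a homeomorphism (some point has dense two-sided orbit). -/
def TransitiveZ [TopologicalSpace X] (f : X ≃ₜ X) : Prop :=
  ∃ x : X, Dense (Set.range fun n : ℤ => zit f n x)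

/-- Measure expansiveness of a homeomorphism. -/
def MeasExpansive [MetricSpace X] [MeasurableSpace X] (f : X ≃ₜ X) : Prop :=
  ∃ δ > (0 : ℝ), ∀ μ : Measure X, IsProbabilityMeasure μ →
    MeasurePreserving f μ μ → (∀ z : X, μ {z} = 0) →
    ∀ x : X, μ (Gamma f δ x) = 0

/-- Strong measure expansiveness of a homeomorphism. -/
def StrongMeasExpansive [MetricSpace X] [MeasurableSpace X] (f : X ≃ₜ X) : Prop :=
  ∃ δ > (0 : ℝ), ∀ μ : Measure X, IsProbabilityMeasure μ →
    MeasurePreserving f μ μ → ∀ x : X, μ (Gamma f δ x) = μ {x}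

/-- Strong measure expansiveness with a specified constant. -/
def StrongMeasExpansiveWith [MetricSpace X] [MeasurableSpace X] (f : X ≃ₜ X) (δ : ℝ) : Prop :=
  ∀ μ : Measure X, IsProbabilityMeasure μ →
    MeasurePreserving f μ μ → ∀ x : X, μ (Gamma f δ x) = μ {x}


section Aux

variable [MetricSpace X]

lemma zit_natCast (f : X ≃ₜ X) (n : ℕ) (y : X) : zit f (n : ℤ) y = (⇑f)^[n] y := by
  simp only [zit, zpow_natCast, Equiv.Perm.coe_pow]
  rfl

lemma continuous_zit (f : X ≃ₜ X) (i : ℤ) : Continuous (zit f i) := by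
  cases i with
  | ofNat n =>
    have : zit f (Int.ofNat n) = (⇑f)^[n] := by
      funext y; exact zit_natCast f n y
    rw [this]
    exact f.continuous.iterate n
  | negSucc n =>
    have : zit f (Int.negSucc n) = (⇑f.symm)^[n + 1] := by
      funext y
      show ⇑(f.toEquiv ^ Int.negSucc n) y = _
      rw [zpow_negSucc, ← inv_pow, Equiv.Perm.coe_pow]
      rfl
    rw [this]
    exact f.symm.continuous.iterate (n + 1)

lemma isClosed_Gamma (f : X ≃ₜ X) (δ : ℝ) (x : X) : IsClosed (Gamma f δ x) := by
  have : Gamma f δ x = ⋂ i : ℤ, {y | dist (zit f i x) (zit f i y) ≤ δ} := by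
    ext y; simp [Gamma, Set.mem_iInter]
  rw [this]
  exact isClosed_iInter fun i =>
    isClosed_le (Continuous.dist continuous_const (continuous_zit f i)) continuous_const

end Aux

theorem accumulation_of_empirical_measures_invariant_and_supported
    [MetricSpace X] [CompactSpace X] [MeasurableSpace X] [BorelSpace X]
    (f : X ≃ₜ X) (x : X) (hx : ¬ IsPeriodicPt' (⇑f) x)
    (ε : ℝ) (hε : 0 < ε) (N : ℕ) (hN : 1 ≤ N)
    (horb : ∀ k : ℤ, ∀ l < N, zit f (k * N) ((⇑f)^[l] x) ∈ Gamma f ε ((⇑f)^[l] x))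
    (μ : Measure X) [IsProbabilityMeasure μ]
    (φ : ℕ → ℕ) (hφ : StrictMono φ) (hφ1 : ∀ n, 1 ≤ φ n)
    (hconv : ∀ g : C(X, ℝ),
      Tendsto (fun n => (∑ i ∈ Finset.range (φ n), g ((⇑f)^[i] x)) / (φ n : ℝ))
        atTop (nhds (∫ y, g y ∂μ))) :
    MeasurePreserving f μ μ ∧ μ (⋃ l ∈ Finset.range N, Gamma f ε ((⇑f)^[l] x)) = 1 := by
  set K : Set X := ⋃ l ∈ Finset.range N, Gamma f ε ((⇑f)^[l] x) with hKdef
  have horbK : ∀ i : ℕ, (⇑f)^[i] x ∈ K := by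
    intro i
    have hlt : i % N < N := Nat.mod_lt _ (by omega)
    have h := horb (i / N : ℕ) (i % N) hlt
    have hzit : zit f (((i / N : ℕ) : ℤ) * (N : ℤ)) ((⇑f)^[i % N] x) = (⇑f)^[i] x := by
      have hc : ((i / N : ℕ) : ℤ) * (N : ℤ) = ((i / N * N : ℕ) : ℤ) := by push_cast; ring
      rw [hc, zit_natCast, ← Function.iterate_add_apply, mul_comm (i / N) N,
        Nat.div_add_mod]
    rw [hzit] at h
    exact Set.mem_biUnion (Finset.mem_range.mpr hlt) h
  have hKclosed : IsClosed K := by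
    apply Set.Finite.isClosed_biUnion (Finset.finite_toSet _)
    intro l _
    exact isClosed_Gamma f ε _
  have hφtop : Tendsto (fun n => (φ n : ℝ)) atTop atTop :=
    tendsto_natCast_atTop_atTop.comp hφ.tendsto_atTop
  -- Key: integrals of g ∘ f and g agree
  have key : ∀ g : C(X, ℝ), ∫ y, g (f y) ∂μ = ∫ y, g y ∂μ := by
    intro g
    have h1 := hconv g
    have h2 := hconv (ContinuousMap.mk (fun y => g (f y)) (g.continuous.comp f.continuous))
    simp only [ContinuousMap.coe_mk] at h2
    have hdiff : Tendsto (fun n => (g ((⇑f)^[φ n] x) - g x) / (φ n : ℝ)) atTop (𝓝 0) := by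
      have hb : Tendsto (fun n => (2 * ‖g‖) / (φ n : ℝ)) atTop (𝓝 0) :=
        Tendsto.div_atTop tendsto_const_nhds hφtop
      apply squeeze_zero_norm _ hb
      intro n
      have hpos : (0 : ℝ) < (φ n : ℝ) := by exact_mod_cast hφ1 n
      rw [norm_div, Real.norm_natCast]
      have hnum : ‖g ((⇑f)^[φ n] x) - g x‖ ≤ 2 * ‖g‖ := by
        calc ‖g ((⇑f)^[φ n] x) - g x‖ ≤ ‖g ((⇑f)^[φ n] x)‖ + ‖g x‖ := norm_sub_le _ _
          _ ≤ ‖g‖ + ‖g‖ := add_le_add (g.norm_coe_le_norm _) (g.norm_coe_le_norm _)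
          _ = 2 * ‖g‖ := by ring
      gcongr
    have hsum : ∀ m : ℕ, (∑ i ∈ Finset.range m, g (f ((⇑f)^[i] x))) =
        (∑ i ∈ Finset.range m, g ((⇑f)^[i] x)) + (g ((⇑f)^[m] x) - g x) := by
      intro m
      have e1 : (∑ i ∈ Finset.range m, g (f ((⇑f)^[i] x)))
          = ∑ i ∈ Finset.range m, g ((⇑f)^[i + 1] x) :=
        Finset.sum_congr rfl fun i _ => by rw [Function.iterate_succ_apply']
      have e2 := Finset.sum_range_succ' (fun i => g ((⇑f)^[i] x)) m
      have e3 := Finset.sum_range_succ (fun i => g ((⇑f)^[i] x)) m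
      simp only [Function.iterate_zero_apply] at e2
      rw [e1]
      linarith
    have halt : Tendsto (fun n => (∑ i ∈ Finset.range (φ n), g (f ((⇑f)^[i] x))) / (φ n : ℝ))
        atTop (𝓝 (∫ y, g y ∂μ)) := by
      have heq : (fun n => (∑ i ∈ Finset.range (φ n), g (f ((⇑f)^[i] x))) / (φ n : ℝ))
          = fun n => (∑ i ∈ Finset.range (φ n), g ((⇑f)^[i] x)) / (φ n : ℝ)
            + (g ((⇑f)^[φ n] x) - g x) / (φ n : ℝ) := by
        funext n
        rw [hsum (φ n), add_div]
      rw [heq]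
      simpa using h1.add hdiff
    exact tendsto_nhds_unique h2 halt
  have hmeas : Measurable ⇑f := f.continuous.measurable
  have hmap : Measure.map f μ = μ := by
    haveI : IsProbabilityMeasure (Measure.map (⇑f) μ) :=
      Measure.isProbabilityMeasure_map hmeas.aemeasurable
    apply MeasureTheory.ext_of_forall_lintegral_eq_of_IsFiniteMeasure
    intro g
    have hgc : Continuous fun y => ((g y : ℝ)) := NNReal.continuous_coe.comp g.continuous
    have hint : Integrable (fun y => (g y : ℝ)) μ :=
      hgc.integrable_of_hasCompactSupport (HasCompactSupport.of_compactSpace _)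
    have hintf : Integrable (fun y => (g (f y) : ℝ)) μ :=
      (hgc.comp f.continuous).integrable_of_hasCompactSupport
        (HasCompactSupport.of_compactSpace _)
    have hkey := key ⟨fun y => (g y : ℝ), hgc⟩
    have hgme : Measurable fun y => ((g y : NNReal) : ENNReal) :=
      measurable_coe_nnreal_ennreal.comp g.continuous.measurable
    rw [lintegral_map hgme hmeas,
      lintegral_coe_eq_integral _ hintf, lintegral_coe_eq_integral _ hint]
    exact congrArg ENNReal.ofReal hkey
  refine ⟨⟨hmeas, hmap⟩, ?_⟩
  rw [← prob_compl_eq_zero_iff hKclosed.measurableSet]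
  have hopen : IsOpen Kᶜ := hKclosed.isOpen_compl
  rw [hopen.measure_eq_iSup_isClosed]
  refine ENNReal.iSup_eq_zero.mpr fun F => ENNReal.iSup_eq_zero.mpr fun hFsub => ENNReal.iSup_eq_zero.mpr fun hFcl => ?_
  obtain ⟨g, hg0, hg1, hg01⟩ := exists_continuous_zero_one_of_isClosed hKclosed hFcl
    (Set.disjoint_left.mpr fun y hy hyF => hFsub hyF hy)
  have hint0 : ∫ y, g y ∂μ = 0 := by
    have hzero : ∀ n : ℕ, (∑ i ∈ Finset.range (φ n), g ((⇑f)^[i] x)) / (φ n : ℝ) = 0 := by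
      intro n
      rw [Finset.sum_eq_zero fun i _ => hg0 (horbK i), zero_div]
    have hc := hconv g
    rw [show (fun n => (∑ i ∈ Finset.range (φ n), g ((⇑f)^[i] x)) / (φ n : ℝ))
        = fun _ : ℕ => (0 : ℝ) from funext hzero] at hc
    exact (tendsto_nhds_unique tendsto_const_nhds hc).symm
  have hgint : Integrable (⇑g) μ :=
    g.continuous.integrable_of_hasCompactSupport (HasCompactSupport.of_compactSpace _)
  have hlint : ∫⁻ y, ENNReal.ofReal (g y) ∂μ = 0 := by
    rw [← ofReal_integral_eq_lintegral_ofReal hgint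
      (Filter.Eventually.of_forall fun y => (hg01 y).1), hint0, ENNReal.ofReal_zero]
  have hgm : Measurable fun y => ENNReal.ofReal (g y) :=
    ENNReal.measurable_ofReal.comp g.continuous.measurable
  have hle : μ F ≤ ∫⁻ y, ENNReal.ofReal (g y) ∂μ := by
    rw [← setLIntegral_one F]
    calc ∫⁻ _ in F, 1 ∂μ ≤ ∫⁻ y in F, ENNReal.ofReal (g y) ∂μ := by
          apply setLIntegral_mono hgm
          intro y hy
          have : g y = 1 := hg1 hy
          rw [this]
          simp
      _ ≤ ∫⁻ y, ENNReal.ofReal (g y) ∂μ := setLIntegral_le_lintegral _ _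
  exact le_antisymm (hle.trans hlint.le) zero_le
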